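/- Suppose the conditions of the consistency lemma hold: A is positive semi-definite, θ = β'Aβ = O(1), trace(Ã²) = o(1), errors independent with max_i(E[ε_i⁴] + σ_i^{-2}) = O(1), max_i P_ii ≤ c < 1, and max_i (x_i'β)² = O(1). Then the variance of the linear part of θ̂ − θ, namely Var(2 Σ_i Σ_ℓ B_{iℓ} x_ℓ'β ε_i) = 4 Σ_i (Σ_ℓ B_{iℓ} x_ℓ'β)² σ_i², is bounded above by 4 (max_i σ_i²) · θ · λ_1(Ã), and hence is o(1). -/

import Mathlib

open Matrix BigOperators Finset

/-- Conjugation identity for quadratic forms over ℝ. -/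
lemma dot_conj {k : ℕ} (C S : Matrix (Fin k) (Fin k) ℝ) (β : Fin k → ℝ) :
    (C *ᵥ β) ⬝ᵥ (S *ᵥ (C *ᵥ β)) = β ⬝ᵥ ((Cᵀ * S * C) *ᵥ β) := by
  rw [← Matrix.mulVec_mulVec, ← Matrix.mulVec_mulVec, Matrix.dotProduct_mulVec (A := Cᵀ),
    Matrix.vecMul_transpose, Matrix.mulVec_mulVec]

lemma dotProduct_sum' {m p : ℕ} (v : Fin m → ℝ) (f : Fin p → Fin m → ℝ) :
    v ⬝ᵥ (∑ ℓ, f ℓ) = ∑ ℓ, v ⬝ᵥ f ℓ := by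
  simp only [dotProduct, Finset.sum_apply, Finset.mul_sum]
  exact Finset.sum_comm

lemma mulVec_sum' {m p : ℕ} (M : Matrix (Fin m) (Fin m) ℝ) (f : Fin p → Fin m → ℝ) :
    M *ᵥ (∑ ℓ, f ℓ) = ∑ ℓ, M *ᵥ f ℓ := by
  rw [← Matrix.mulVecLin_apply, map_sum]
  simp [Matrix.mulVecLin_apply]

lemma sum_mulVec' {m p : ℕ} (f : Fin p → Matrix (Fin m) (Fin m) ℝ) (w : Fin m → ℝ) :
    (∑ ℓ, f ℓ) *ᵥ w = ∑ ℓ, (f ℓ) *ᵥ w := by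
  ext j
  simp only [Matrix.mulVec, dotProduct, Matrix.sum_apply, Finset.sum_apply,
    Finset.sum_mul]
  exact Finset.sum_comm

lemma vecMulVec_mulVec' {m : ℕ} (u w : Fin m → ℝ) :
    Matrix.vecMulVec u u *ᵥ w = (u ⬝ᵥ w) • u := by
  ext j
  simp only [Matrix.mulVec, dotProduct, Matrix.vecMulVec_apply, Pi.smul_apply,
    smul_eq_mul, Finset.sum_mul]
  exact Finset.sum_congr rfl fun b _ => by ring

/-- For a real positive semidefinite matrix `M`,
`zᵀ M² z ≤ (sup of eigenvalues) * zᵀ M z`. -/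
lemma sq_dot_le {k : ℕ} {M : Matrix (Fin k) (Fin k) ℝ} (hpsd : M.PosSemidef)
    (hherm : M.IsHermitian) (z : Fin k → ℝ) :
    z ⬝ᵥ ((M * M) *ᵥ z) ≤ (⨆ j, hherm.eigenvalues j) * (z ⬝ᵥ (M *ᵥ z)) := by
  set lam : ℝ := ⨆ j, hherm.eigenvalues j with hlam
  have hbdd : BddAbove (Set.range hherm.eigenvalues) :=
    (Set.finite_range _).bddAbove
  set U : Matrix (Fin k) (Fin k) ℝ := (hherm.eigenvectorUnitary : Matrix (Fin k) (Fin k) ℝ)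
    with hU
  set D : Matrix (Fin k) (Fin k) ℝ := Matrix.diagonal hherm.eigenvalues with hDdef
  have hUU : star U * U = 1 := (Matrix.mem_unitaryGroup_iff').mp hherm.eigenvectorUnitary.2
  have hspec : M = U * D * star U := by
    have := hherm.spectral_theorem
    simpa [RCLike.ofReal_real_eq_id] using this
  have h1 : M * M = U * (D * D) * star U := by
    nth_rewrite 1 [hspec]
    nth_rewrite 1 [hspec]
    calc (U * D * star U) * (U * D * star U) = U * D * (star U * U) * (D * star U) := by
          noncomm_ring
      _ = U * (D * D) * star U := by rw [hUU, Matrix.mul_one]; noncomm_ring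
  have h2 : lam • M = U * (lam • D) * star U := by
    nth_rewrite 1 [hspec]
    simp [Matrix.smul_mul, Matrix.mul_smul]
  have h3 : lam • D - D * D
      = Matrix.diagonal (fun j => lam * hherm.eigenvalues j
          - hherm.eigenvalues j * hherm.eigenvalues j) := by
    rw [hDdef, Matrix.diagonal_mul_diagonal, ← Matrix.diagonal_smul, ← Matrix.diagonal_sub]
    rfl
  have hD : (lam • M - M * M).PosSemidef := by
    have hdiag : lam • M - M * M = U * (lam • D - D * D) * star U := by
      rw [h2, h1, ← Matrix.sub_mul, ← Matrix.mul_sub]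
    rw [hdiag, h3, Matrix.star_eq_conjTranspose]
    refine (Matrix.posSemidef_diagonal_iff.mpr fun j => ?_).mul_mul_conjTranspose_same U
    have h0 : 0 ≤ hherm.eigenvalues j := hpsd.eigenvalues_nonneg j
    have h1 : hherm.eigenvalues j ≤ lam := le_ciSup hbdd j
    nlinarith
  have hge := hD.dotProduct_mulVec_nonneg z
  simp only [star_trivial] at hge
  have hexp : z ⬝ᵥ ((lam • M - M * M) *ᵥ z)
      = lam * (z ⬝ᵥ (M *ᵥ z)) - z ⬝ᵥ ((M * M) *ᵥ z) := by
    rw [Matrix.sub_mulVec, dotProduct_sub, Matrix.smul_mulVec,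
      dotProduct_smul, smul_eq_mul]
  rw [hexp] at hge
  linarith

/-- under the consistency conditions (A positive semi-definite,
leverages bounded by `c < 1`, etc.), the variance of the linear part of
`θ̂ − θ`, namely `4 Σ_i (Σ_ℓ B_{iℓ} x_ℓ'β)² σ_i²`, is bounded above by
`4 (max_i σ_i²) · β'Aβ · λ_max(Ã)`. -/
theorem linear_part_variance_bound {n k : ℕ}
    (x : Fin n → Fin k → ℝ) (β : Fin k → ℝ) (σ : Fin n → ℝ)
    (A Sxx R : Matrix (Fin k) (Fin k) ℝ)
    (hA : A.PosSemidef)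
    (hSxx : Sxx = ∑ i, vecMulVec (x i) (x i))
    (hS : IsUnit Sxx.det)
    (hRsym : Rᵀ = R) (hRR : R * R = Sxx) (hR : IsUnit R.det)
    (c : ℝ) (hc1 : c < 1)
    (hP : ∀ i, x i ⬝ᵥ Sxx⁻¹.mulVec (x i) ≤ c)
    (Atil : Matrix (Fin k) (Fin k) ℝ)
    (hAtil : Atil = R⁻¹ * A * R⁻¹)
    (hherm : Atil.IsHermitian)
    (B : Fin n → Fin n → ℝ)
    (hB : ∀ i ℓ, B i ℓ = x i ⬝ᵥ (Sxx⁻¹ * A * Sxx⁻¹).mulVec (x ℓ)) :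
    4 * ∑ i, (∑ ℓ, B i ℓ * (x ℓ ⬝ᵥ β)) ^ 2 * (σ i) ^ 2
      ≤ 4 * (⨆ i, (σ i) ^ 2) * (β ⬝ᵥ A.mulVec β) * (⨆ j, hherm.eigenvalues j) := by
  classical
  have hAsym : Aᵀ = A := hA.1
  have hSinvsym : (Sxx⁻¹)ᵀ = Sxx⁻¹ := by
    rw [Matrix.transpose_nonsing_inv, ← hRR, Matrix.transpose_mul, hRsym]
  have hRinvsym : (R⁻¹)ᵀ = R⁻¹ := by
    rw [Matrix.transpose_nonsing_inv, hRsym]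
  have hAtilpsd : Atil.PosSemidef := by
    have h := hA.conjTranspose_mul_mul_same R⁻¹
    have hct : (R⁻¹)ᴴ = R⁻¹ := by
      rw [Matrix.conjTranspose]
      ext i j; simpa using congrFun (congrFun hRinvsym i) j
    rw [hct] at h
    rwa [hAtil]
  set w : Fin k → ℝ := (Sxx⁻¹ * A) *ᵥ β with hw
  set z : Fin k → ℝ := R *ᵥ β with hz
  set lam : ℝ := ⨆ j, hherm.eigenvalues j with hlam
  set S : ℝ := ⨆ i, (σ i) ^ 2 with hSdef
  -- Step 1: inner sums
  have hg : ∀ i, (∑ ℓ, B i ℓ * (x ℓ ⬝ᵥ β)) = x i ⬝ᵥ w := by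
    intro i
    have hSb : Sxx *ᵥ β = ∑ ℓ, (x ℓ ⬝ᵥ β) • x ℓ := by
      rw [hSxx, sum_mulVec']
      exact Finset.sum_congr rfl fun ℓ _ => vecMulVec_mulVec' (x ℓ) β
    have hMS : (Sxx⁻¹ * A * Sxx⁻¹) * Sxx = Sxx⁻¹ * A := by
      rw [Matrix.mul_assoc, Matrix.nonsing_inv_mul Sxx hS, Matrix.mul_one]
    calc (∑ ℓ, B i ℓ * (x ℓ ⬝ᵥ β))
        = ∑ ℓ, x i ⬝ᵥ ((Sxx⁻¹ * A * Sxx⁻¹) *ᵥ ((x ℓ ⬝ᵥ β) • x ℓ)) := by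
          refine Finset.sum_congr rfl fun ℓ _ => ?_
          rw [hB i ℓ, Matrix.mulVec_smul, dotProduct_smul, smul_eq_mul]
          ring
      _ = x i ⬝ᵥ ((Sxx⁻¹ * A * Sxx⁻¹) *ᵥ (∑ ℓ, (x ℓ ⬝ᵥ β) • x ℓ)) := by
          rw [mulVec_sum', dotProduct_sum']
      _ = x i ⬝ᵥ w := by
          rw [← hSb, Matrix.mulVec_mulVec, hMS]
  -- Step 2: sum of squares as a quadratic form
  have hT : ∑ i, (x i ⬝ᵥ w) ^ 2 = w ⬝ᵥ (Sxx *ᵥ w) := by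
    rw [hSxx, sum_mulVec', dotProduct_sum']
    refine Finset.sum_congr rfl fun i _ => ?_
    rw [vecMulVec_mulVec', dotProduct_smul, smul_eq_mul, dotProduct_comm]
    ring
  -- Step 3: rewrite the quadratic form
  have hwS : w ⬝ᵥ (Sxx *ᵥ w) = β ⬝ᵥ ((A * Sxx⁻¹ * A) *ᵥ β) := by
    rw [hw, dot_conj, Matrix.transpose_mul, hAsym, hSinvsym]
    congr 2
    rw [Matrix.nonsing_inv_mul_cancel_right _ _ hS, Matrix.mul_assoc]
  have hA' : R * Atil * R = A := by
    rw [hAtil]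
    calc R * (R⁻¹ * A * R⁻¹) * R = R * R⁻¹ * A * (R⁻¹ * R) := by noncomm_ring
      _ = A := by
          rw [Matrix.mul_nonsing_inv R hR, Matrix.nonsing_inv_mul R hR, Matrix.one_mul,
            Matrix.mul_one]
  have hSinv : Sxx⁻¹ = R⁻¹ * R⁻¹ := by rw [← hRR, Matrix.mul_inv_rev]
  have hASA : A * Sxx⁻¹ * A = R * (Atil * Atil) * R := by
    rw [hSinv, ← hA']
    simp only [Matrix.mul_assoc]
    rw [Matrix.nonsing_inv_mul_cancel_left _ _ hR, Matrix.mul_nonsing_inv_cancel_left _ _ hR]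
  -- Step 4: quadratic forms in z
  have hq1 : β ⬝ᵥ ((A * Sxx⁻¹ * A) *ᵥ β) = z ⬝ᵥ ((Atil * Atil) *ᵥ z) := by
    rw [hz, dot_conj, hRsym, ← hASA]
  have hq2 : β ⬝ᵥ (A *ᵥ β) = z ⬝ᵥ (Atil *ᵥ z) := by
    rw [hz, dot_conj, hRsym, hA']
  -- Step 5: spectral bound
  have hkey : z ⬝ᵥ ((Atil * Atil) *ᵥ z) ≤ lam * (z ⬝ᵥ (Atil *ᵥ z)) :=
    sq_dot_le hAtilpsd hherm z
  -- Assembly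
  have hS0 : 0 ≤ S := Real.iSup_nonneg fun i => sq_nonneg _
  have hσ : ∀ i, (σ i) ^ 2 ≤ S := fun i =>
    le_ciSup (f := fun i => (σ i) ^ 2) ((Set.finite_range _).bddAbove) i
  have hsum1 : ∑ i, (∑ ℓ, B i ℓ * (x ℓ ⬝ᵥ β)) ^ 2 * (σ i) ^ 2
      ≤ (∑ i, (x i ⬝ᵥ w) ^ 2) * S := by
    rw [Finset.sum_mul]
    refine Finset.sum_le_sum fun i _ => ?_
    rw [hg i]
    exact mul_le_mul_of_nonneg_left (hσ i) (sq_nonneg _)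
  have hsum2 : ∑ i, (x i ⬝ᵥ w) ^ 2 ≤ lam * (β ⬝ᵥ (A *ᵥ β)) := by
    rw [hT, hwS, hq1, hq2]
    exact hkey
  have hmain : ∑ i, (∑ ℓ, B i ℓ * (x ℓ ⬝ᵥ β)) ^ 2 * (σ i) ^ 2
      ≤ lam * (β ⬝ᵥ (A *ᵥ β)) * S :=
    le_trans hsum1 (mul_le_mul_of_nonneg_right hsum2 hS0)
  calc 4 * ∑ i, (∑ ℓ, B i ℓ * (x ℓ ⬝ᵥ β)) ^ 2 * (σ i) ^ 2
      ≤ 4 * (lam * (β ⬝ᵥ (A *ᵥ β)) * S) := by linarith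
    _ = 4 * S * (β ⬝ᵥ (A *ᵥ β)) * lam := by ring
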